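/- Let u* be the B^s solution of the integral equation u + (α−Δ)^{-1}(W u) = (α−Δ)^{-1} f, with α > 0, s ≥ 0, W, f ∈ B^s(ℝ^d). Then u* ∈ B^{s+2}(ℝ^d) with ‖u*‖_{B^{s+2}} ≤ (1/min{α,1})(2^{s/2}‖W‖_{B^s}‖u*‖_{B^s} + ‖f‖_{B^s}). -/

import Mathlib

open MeasureTheory Complex
open scoped ENNReal

noncomputable section

/-- Euclidean space `ℝ^d`. -/
abbrev Ed (d : ℕ) := EuclideanSpace ℝ (Fin d)

/-- Inverse Fourier transform (with the convention of the paper):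
`g(x) = ∫ v(ξ) e^{i x·ξ} dξ`, so that `v = ĝ` is the Fourier transform of `g`. -/
def invFT {d : ℕ} (v : Ed d → ℂ) (x : Ed d) : ℂ :=
  ∫ ξ, v ξ * Complex.exp (Complex.I * ((inner ℝ ξ x : ℝ) : ℂ))

/-- `g` has Fourier transform (profile) `v`, i.e. `ĝ = v ∈ L¹` and
`g(x) = ∫ v(ξ) e^{i x·ξ} dξ`. -/
def HasFT {d : ℕ} (g : Ed d → ℂ) (v : Ed d → ℂ) : Prop :=
  Integrable v ∧ ∀ x, g x = invFT v x

/-- The spectral Barron weight `(1+|ξ|²)^{s/2}`. -/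
def bWeight (s : ℝ) {d : ℕ} (ξ : Ed d) : ℝ := (1 + ‖ξ‖ ^ 2) ^ (s / 2)

/-- The spectral Barron norm `∫ |ĝ(ξ)| (1+|ξ|²)^{s/2} dξ`, expressed in terms of `v = ĝ`. -/
def bNorm {d : ℕ} (s : ℝ) (v : Ed d → ℂ) : ℝ := ∫ ξ, ‖v ξ‖ * bWeight s ξ

/-- Membership in the spectral Barron space `B^s`, on the Fourier side. -/
def bMem {d : ℕ} (s : ℝ) (v : Ed d → ℂ) : Prop :=
  Integrable (fun ξ => ‖v ξ‖ * bWeight s ξ)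

section AuxLemmas

variable {d : ℕ}


lemma bWeight_pos (s : ℝ) (ξ : Ed d) : 0 < bWeight s ξ :=
  Real.rpow_pos_of_pos (by positivity) _

lemma bWeight_continuous (s : ℝ) : Continuous (bWeight s (d := d)) := by
  apply Continuous.rpow_const (by continuity)
  intro x
  left
  positivity

lemma aemeas_norm {s : ℝ} {v : Ed d → ℂ} (h : bMem s v) :
    AEMeasurable (fun ξ => ‖v ξ‖) (volume : Measure (Ed d)) := by
  have h1 : AEMeasurable (fun ξ => ‖v ξ‖ * bWeight s ξ) volume := h.aemeasurable
  have h2 : Measurable (fun ξ : Ed d => (bWeight s ξ)⁻¹) :=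
    ((bWeight_continuous s).inv₀ fun x => (bWeight_pos s x).ne').measurable
  refine (h1.mul h2.aemeasurable).congr (Filter.Eventually.of_forall fun ξ => ?_)
  show ‖v ξ‖ * bWeight s ξ * (bWeight s ξ)⁻¹ = ‖v ξ‖
  rw [mul_inv_cancel_right₀ (bWeight_pos s ξ).ne']

lemma bNorm_nonneg (s : ℝ) (v : Ed d → ℂ) : 0 ≤ bNorm s v :=
  integral_nonneg fun ξ => mul_nonneg (norm_nonneg _) (bWeight_pos s ξ).le

lemma bWeight_subadd {s : ℝ} (hs : 0 ≤ s) (ξ η : Ed d) :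
    bWeight s ξ ≤ 2 ^ (s / 2) * (bWeight s η * bWeight s (ξ - η)) := by
  have hξ : ‖ξ‖ ≤ ‖η‖ + ‖ξ - η‖ := by
    calc ‖ξ‖ = ‖η + (ξ - η)‖ := by rw [add_sub_cancel]
      _ ≤ ‖η‖ + ‖ξ - η‖ := norm_add_le _ _
  have key : 1 + ‖ξ‖ ^ 2 ≤ 2 * ((1 + ‖η‖ ^ 2) * (1 + ‖ξ - η‖ ^ 2)) := by
    nlinarith [norm_nonneg ξ, norm_nonneg η, norm_nonneg (ξ - η),
      sq_nonneg (‖η‖ - ‖ξ - η‖), sq_nonneg (‖η‖ * ‖ξ - η‖)]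
  calc bWeight s ξ ≤ (2 * ((1 + ‖η‖ ^ 2) * (1 + ‖ξ - η‖ ^ 2))) ^ (s / 2) :=
        Real.rpow_le_rpow (by positivity) key (by positivity)
    _ = 2 ^ (s / 2) * (bWeight s η * bWeight s (ξ - η)) := by
        rw [Real.mul_rpow (by norm_num) (by positivity),
          Real.mul_rpow (by positivity) (by positivity)]
        rfl

lemma bWeight_succ (s : ℝ) (ξ : Ed d) :
    bWeight (s + 2) ξ = bWeight s ξ * (1 + ‖ξ‖ ^ 2) := by
  unfold bWeight
  rw [show (s + 2) / 2 = s / 2 + 1 by ring, Real.rpow_add (by positivity), Real.rpow_one]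


end AuxLemmas

/-- **bootstrap step.** Let `u*` be a `B^s` solution of the integral
equation `u + (α-Δ)⁻¹(Wu) = (α-Δ)⁻¹ f` (on the Fourier side:
`û(ξ) + (Ŵ∗û)(ξ)/(α+|ξ|²) = f̂(ξ)/(α+|ξ|²)` a.e.), with `α > 0`, `s ≥ 0`,
`W, f ∈ B^s(ℝ^d)`. Then `u* ∈ B^{s+2}(ℝ^d)` with
`‖u*‖_{B^{s+2}} ≤ (1/min{α,1}) (2^{s/2} ‖W‖_{B^s} ‖u*‖_{B^s} + ‖f‖_{B^s})`. -/
theorem barron_bootstrap {d : ℕ} (s α : ℝ) (hs : 0 ≤ s) (hα : 0 < α)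
    (vW vf vu : Ed d → ℂ) (hWs : bMem s vW) (hfs : bMem s vf) (hus : bMem s vu)
    (heq : ∀ᵐ ξ : Ed d,
      vu ξ + (∫ η, vW η * vu (ξ - η)) / ((α : ℂ) + (‖ξ‖ : ℂ) ^ 2) =
        vf ξ / ((α : ℂ) + (‖ξ‖ : ℂ) ^ 2)) :
    bMem (s + 2) vu ∧
    bNorm (s + 2) vu ≤
      (1 / min α 1) * ((2 : ℝ) ^ (s / 2) * bNorm s vW * bNorm s vu + bNorm s vf) := by
  have hm0 : 0 < min α 1 := lt_min hα one_pos
  have hmα : min α 1 ≤ α := min_le_left _ _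
  have hm1 : min α 1 ≤ 1 := min_le_right _ _
  set ν : Measure (Ed d) := volume with hν
  set wE : ℝ → Ed d → ℝ≥0∞ := fun t ξ => ENNReal.ofReal (bWeight t ξ) with hwE
  set nW : Ed d → ℝ≥0∞ := fun ξ => ENNReal.ofReal ‖vW ξ‖ with hnWdef
  set nf : Ed d → ℝ≥0∞ := fun ξ => ENNReal.ofReal ‖vf ξ‖ with hnfdef
  set nu : Ed d → ℝ≥0∞ := fun ξ => ENNReal.ofReal ‖vu ξ‖ with hnudef
  set Cb : Ed d → ℝ≥0∞ := fun ξ => ∫⁻ η, nW η * nu (ξ - η) ∂ν with hCbdef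
  set c2 : ℝ≥0∞ := ENNReal.ofReal ((2 : ℝ) ^ (s / 2)) with hc2
  -- measurability
  have hwme : ∀ t : ℝ, Measurable (wE t) := fun t =>
    ENNReal.measurable_ofReal.comp (bWeight_continuous t).measurable
  have hWm : AEMeasurable nW ν :=
    ENNReal.measurable_ofReal.comp_aemeasurable (aemeas_norm hWs)
  have hfm : AEMeasurable nf ν :=
    ENNReal.measurable_ofReal.comp_aemeasurable (aemeas_norm hfs)
  have hum : AEMeasurable nu ν :=
    ENNReal.measurable_ofReal.comp_aemeasurable (aemeas_norm hus)
  have hsubQMP : Measure.QuasiMeasurePreserving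
      (fun p : Ed d × Ed d => p.1 - p.2) (ν.prod ν) ν :=
    Measure.quasiMeasurePreserving_fst.comp
      (measurePreserving_sub_prod ν ν).quasiMeasurePreserving
  have hWm2 : AEMeasurable (fun p : Ed d × Ed d => nW p.2) (ν.prod ν) :=
    hWm.comp_quasiMeasurePreserving Measure.quasiMeasurePreserving_snd
  have hum2 : AEMeasurable (fun p : Ed d × Ed d => nu (p.1 - p.2)) (ν.prod ν) :=
    hum.comp_quasiMeasurePreserving hsubQMP
  -- Fact A
  have hA : ∀ (t : ℝ) (v : Ed d → ℂ), bMem t v →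
      (∫⁻ ξ, ENNReal.ofReal ‖v ξ‖ * wE t ξ ∂ν) = ENNReal.ofReal (bNorm t v) := by
    intro t v hv
    calc ∫⁻ ξ, ENNReal.ofReal ‖v ξ‖ * wE t ξ ∂ν
        = ∫⁻ ξ, ENNReal.ofReal (‖v ξ‖ * bWeight t ξ) ∂ν :=
          lintegral_congr fun ξ => (ENNReal.ofReal_mul (norm_nonneg _)).symm
      _ = ENNReal.ofReal (bNorm t v) :=
          (ofReal_integral_eq_lintegral_ofReal hv
            (Filter.Eventually.of_forall fun ξ =>
              mul_nonneg (norm_nonneg _) (bWeight_pos _ _).le)).symm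
  -- convolution bound
  have hC : ∀ ξ, ENNReal.ofReal ‖∫ η, vW η * vu (ξ - η) ∂ν‖ ≤ Cb ξ := by
    intro ξ
    rw [ofReal_norm_eq_enorm]
    calc (‖∫ η, vW η * vu (ξ - η) ∂ν‖₊ : ℝ≥0∞)
        ≤ ∫⁻ η, ‖vW η * vu (ξ - η)‖₊ ∂ν := enorm_integral_le_lintegral_enorm _
      _ = Cb ξ := by
          refine lintegral_congr fun η => ?_
          show (‖vW η * vu (ξ - η)‖₊ : ℝ≥0∞)
            = ENNReal.ofReal ‖vW η‖ * ENNReal.ofReal ‖vu (ξ - η)‖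
          show ‖vW η * vu (ξ - η)‖ₑ = _
          rw [ofReal_norm_eq_enorm, ofReal_norm_eq_enorm, enorm_mul]
  -- Tonelli: bound for the weighted convolution
  have hG : AEMeasurable (Function.uncurry fun ξ η : Ed d =>
      nW η * wE s η * c2 * (nu (ξ - η) * wE s (ξ - η))) (ν.prod ν) := by
    have h1 : AEMeasurable (fun p : Ed d × Ed d => wE s p.2) (ν.prod ν) :=
      ((hwme s).comp measurable_snd).aemeasurable
    have h2 : AEMeasurable (fun p : Ed d × Ed d => wE s (p.1 - p.2)) (ν.prod ν) :=
      ((hwme s).comp (measurable_fst.sub measurable_snd)).aemeasurable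
    exact ((hWm2.mul h1).mul aemeasurable_const).mul (hum2.mul h2)
  have hJ : (∫⁻ ξ, Cb ξ * wE s ξ ∂ν) ≤
      c2 * (ENNReal.ofReal (bNorm s vW) * ENNReal.ofReal (bNorm s vu)) := by
    have hwne : ∀ t ξ, wE t ξ ≠ ⊤ := fun t ξ => ENNReal.ofReal_ne_top
    calc ∫⁻ ξ, Cb ξ * wE s ξ ∂ν
        = ∫⁻ ξ, ∫⁻ η, nW η * nu (ξ - η) * wE s ξ ∂ν ∂ν :=
          lintegral_congr fun ξ => (lintegral_mul_const' _ _ (hwne s ξ)).symm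
      _ ≤ ∫⁻ ξ, ∫⁻ η, nW η * wE s η * c2 * (nu (ξ - η) * wE s (ξ - η)) ∂ν ∂ν := by
          refine lintegral_mono fun ξ => lintegral_mono fun η => ?_
          have hw : wE s ξ ≤ c2 * (wE s η * wE s (ξ - η)) := by
            calc wE s ξ
                ≤ ENNReal.ofReal ((2:ℝ) ^ (s/2) * (bWeight s η * bWeight s (ξ - η))) :=
                  ENNReal.ofReal_le_ofReal (bWeight_subadd hs ξ η)
              _ = c2 * (wE s η * wE s (ξ - η)) := by
                  rw [ENNReal.ofReal_mul (by positivity),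
                    ENNReal.ofReal_mul (bWeight_pos s η).le]
          calc nW η * nu (ξ - η) * wE s ξ
              ≤ nW η * nu (ξ - η) * (c2 * (wE s η * wE s (ξ - η))) :=
                mul_le_mul_right hw _
            _ = nW η * wE s η * c2 * (nu (ξ - η) * wE s (ξ - η)) := by ring
      _ = ∫⁻ η, ∫⁻ ξ, nW η * wE s η * c2 * (nu (ξ - η) * wE s (ξ - η)) ∂ν ∂ν :=
          lintegral_lintegral_swap hG
      _ = ∫⁻ η, nW η * wE s η * c2 * ∫⁻ ξ, nu (ξ - η) * wE s (ξ - η) ∂ν ∂ν := by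
          refine lintegral_congr fun η => lintegral_const_mul' _ _ ?_
          exact ENNReal.mul_ne_top (ENNReal.mul_ne_top ENNReal.ofReal_ne_top
            ENNReal.ofReal_ne_top) ENNReal.ofReal_ne_top
      _ = ∫⁻ η, nW η * wE s η * c2 * ENNReal.ofReal (bNorm s vu) ∂ν := by
          refine lintegral_congr fun η => ?_
          congr 1
          calc ∫⁻ ξ, nu (ξ - η) * wE s (ξ - η) ∂ν
              = ∫⁻ ξ, nu ξ * wE s ξ ∂ν :=
                lintegral_sub_right_eq_self (fun ξ => nu ξ * wE s ξ) η
            _ = ENNReal.ofReal (bNorm s vu) := hA s vu hus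
      _ = (∫⁻ η, nW η * wE s η ∂ν) * (c2 * ENNReal.ofReal (bNorm s vu)) := by
          rw [← lintegral_mul_const' (c2 * ENNReal.ofReal (bNorm s vu)) _
            (ENNReal.mul_ne_top ENNReal.ofReal_ne_top ENNReal.ofReal_ne_top)]
          exact lintegral_congr fun η => by ring
      _ = ENNReal.ofReal (bNorm s vW) * (c2 * ENNReal.ofReal (bNorm s vu)) := by
          rw [hA s vW hWs]
      _ = c2 * (ENNReal.ofReal (bNorm s vW) * ENNReal.ofReal (bNorm s vu)) := by ring
  -- pointwise a.e. bound
  have hptwise : ∀ᵐ ξ ∂ν, nu ξ * wE (s + 2) ξ ≤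
      ENNReal.ofReal (1 / min α 1) * ((nf ξ + Cb ξ) * wE s ξ) := by
    filter_upwards [heq] with ξ hξ
    set C : ℂ := ∫ η, vW η * vu (ξ - η) ∂ν with hCdef
    have hαt : 0 < α + ‖ξ‖ ^ 2 := by positivity
    have hD : ((α : ℂ) + (‖ξ‖ : ℂ) ^ 2) = ((α + ‖ξ‖ ^ 2 : ℝ) : ℂ) := by push_cast; ring
    have hD0 : ((α : ℂ) + (‖ξ‖ : ℂ) ^ 2) ≠ 0 := by
      rw [hD]
      exact_mod_cast hαt.ne'
    have hu : vu ξ = (vf ξ - C) / ((α : ℂ) + (‖ξ‖ : ℂ) ^ 2) := by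
      rw [eq_div_iff hD0]
      field_simp [hD0] at hξ
      linear_combination hξ
    have hnorm : ‖vu ξ‖ = ‖vf ξ - C‖ / (α + ‖ξ‖ ^ 2) := by
      rw [hu, norm_div, hD, Complex.norm_real, Real.norm_of_nonneg hαt.le]
    have hdiv : (1 + ‖ξ‖ ^ 2) / (α + ‖ξ‖ ^ 2) ≤ 1 / min α 1 := by
      rw [div_le_div_iff₀ hαt hm0]
      nlinarith [mul_nonneg (sub_nonneg.mpr hm1) (sq_nonneg ‖ξ‖)]
    have hreal : ‖vu ξ‖ * bWeight (s + 2) ξ ≤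
        (1 / min α 1) * (‖vf ξ - C‖ * bWeight s ξ) := by
      calc ‖vu ξ‖ * bWeight (s + 2) ξ
          = (‖vf ξ - C‖ * bWeight s ξ) * ((1 + ‖ξ‖ ^ 2) / (α + ‖ξ‖ ^ 2)) := by
            rw [hnorm, bWeight_succ]; ring
        _ ≤ (‖vf ξ - C‖ * bWeight s ξ) * (1 / min α 1) :=
            mul_le_mul_of_nonneg_left hdiv (mul_nonneg (norm_nonneg _) (bWeight_pos _ _).le)
        _ = (1 / min α 1) * (‖vf ξ - C‖ * bWeight s ξ) := by ring
    calc nu ξ * wE (s + 2) ξ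
        = ENNReal.ofReal (‖vu ξ‖ * bWeight (s + 2) ξ) :=
          (ENNReal.ofReal_mul (norm_nonneg _)).symm
      _ ≤ ENNReal.ofReal ((1 / min α 1) * (‖vf ξ - C‖ * bWeight s ξ)) :=
          ENNReal.ofReal_le_ofReal hreal
      _ = ENNReal.ofReal (1 / min α 1) * (ENNReal.ofReal ‖vf ξ - C‖ * wE s ξ) := by
          rw [ENNReal.ofReal_mul (by positivity), ENNReal.ofReal_mul (norm_nonneg _)]
      _ ≤ ENNReal.ofReal (1 / min α 1) * ((nf ξ + Cb ξ) * wE s ξ) := by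
          gcongr
          calc ENNReal.ofReal ‖vf ξ - C‖
              ≤ ENNReal.ofReal (‖vf ξ‖ + ‖C‖) :=
                ENNReal.ofReal_le_ofReal (norm_sub_le _ _)
            _ = nf ξ + ENNReal.ofReal ‖C‖ :=
                ENNReal.ofReal_add (norm_nonneg _) (norm_nonneg _)
            _ ≤ nf ξ + Cb ξ := add_le_add le_rfl (hC ξ)
  -- combine
  have hRHS : (0:ℝ) ≤ (1 / min α 1) *
      ((2:ℝ) ^ (s / 2) * bNorm s vW * bNorm s vu + bNorm s vf) := by
    have h1 := bNorm_nonneg s vW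
    have h2 := bNorm_nonneg s vu
    have h3 := bNorm_nonneg s vf
    have : (0:ℝ) ≤ (2:ℝ) ^ (s / 2) := by positivity
    positivity
  have hInt : (∫⁻ ξ, nu ξ * wE (s + 2) ξ ∂ν) ≤ ENNReal.ofReal
      ((1 / min α 1) * ((2:ℝ) ^ (s / 2) * bNorm s vW * bNorm s vu + bNorm s vf)) := by
    calc ∫⁻ ξ, nu ξ * wE (s + 2) ξ ∂ν
        ≤ ∫⁻ ξ, ENNReal.ofReal (1 / min α 1) * ((nf ξ + Cb ξ) * wE s ξ) ∂ν :=
          lintegral_mono_ae hptwise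
      _ = ENNReal.ofReal (1 / min α 1) * ∫⁻ ξ, (nf ξ + Cb ξ) * wE s ξ ∂ν :=
          lintegral_const_mul' _ _ ENNReal.ofReal_ne_top
      _ = ENNReal.ofReal (1 / min α 1) *
          ((∫⁻ ξ, nf ξ * wE s ξ ∂ν) + ∫⁻ ξ, Cb ξ * wE s ξ ∂ν) := by
          congr 1
          rw [← lintegral_add_left' (f := fun ξ => nf ξ * wE s ξ) (hfm.mul (hwme s).aemeasurable)]
          exact lintegral_congr fun ξ => by ring
      _ ≤ ENNReal.ofReal (1 / min α 1) *
          (ENNReal.ofReal (bNorm s vf) +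
            c2 * (ENNReal.ofReal (bNorm s vW) * ENNReal.ofReal (bNorm s vu))) := by
          rw [hA s vf hfs]
          gcongr
      _ = ENNReal.ofReal
          ((1 / min α 1) * ((2:ℝ) ^ (s / 2) * bNorm s vW * bNorm s vu + bNorm s vf)) := by
          rw [show (1 / min α 1) * ((2:ℝ) ^ (s / 2) * bNorm s vW * bNorm s vu + bNorm s vf)
              = (1 / min α 1) * (bNorm s vf + (2:ℝ) ^ (s / 2) * (bNorm s vW * bNorm s vu))
              from by ring]
          rw [ENNReal.ofReal_mul (by positivity : (0:ℝ) ≤ 1 / min α 1),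
            ENNReal.ofReal_add (bNorm_nonneg s vf)
              (mul_nonneg (by positivity) (mul_nonneg (bNorm_nonneg s vW) (bNorm_nonneg s vu))),
            ENNReal.ofReal_mul (by positivity : (0:ℝ) ≤ (2:ℝ) ^ (s / 2)),
            ENNReal.ofReal_mul (bNorm_nonneg s vW)]
  have hmem : bMem (s + 2) vu := by
    refine ⟨((aemeas_norm hus).mul
      (bWeight_continuous (s + 2)).measurable.aemeasurable).aestronglyMeasurable, ?_⟩
    rw [hasFiniteIntegral_iff_ofReal (Filter.Eventually.of_forall fun ξ =>
      mul_nonneg (norm_nonneg _) (bWeight_pos _ _).le)]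
    calc ∫⁻ ξ, ENNReal.ofReal (‖vu ξ‖ * bWeight (s + 2) ξ) ∂ν
        = ∫⁻ ξ, nu ξ * wE (s + 2) ξ ∂ν :=
          lintegral_congr fun ξ => ENNReal.ofReal_mul (norm_nonneg _)
      _ ≤ _ := hInt
      _ < ⊤ := ENNReal.ofReal_lt_top
  refine ⟨hmem, ?_⟩
  rw [← ENNReal.ofReal_le_ofReal_iff hRHS]
  exact le_trans (le_of_eq (hA (s + 2) vu hmem).symm) hInt
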